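/- Demand monotonicity within the raised-cutoff set: with demand defined as each type choosing its best feasible school, any type that demands some school in J = {c : p_c < p'_c} at the higher cutoffs p' still demands some (possibly different) school in J at the lower cutoffs p; consequently the aggregate demand for J satisfies Σ_{c∈J} D_c(p) ≥ Σ_{c∈J} D_c(p') plus the mass of types newly demanding schools in J. -/

import Mathlib

open MeasureTheory

/-- Type `θ = (u, s)` demands school `d` at cutoffs `q` if `d` is feasible
(`s_d > q_d`), gives positive utility, and is `u`-maximal among feasible schools with
positive utility. -/
def Demands {C : Type*} (q : C → ℝ) (d : C) (θ : (C → ℝ) × (C → ℝ)) : Prop :=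
  q d < θ.2 d ∧ 0 < θ.1 d ∧ ∀ e, q e < θ.2 e → 0 < θ.1 e → θ.1 e ≤ θ.1 d

/-- Demand monotonicity within the raised-cutoff set `J = {c : p_c < p'_c}`:
(i) any type with strict preferences demanding a school in `J` at the higher cutoffs
`p'` still demands some school in `J` at `p`; (ii) consequently, if `η`-almost every
type has strict preferences, the aggregate demand for `J` at `p` is at least the
demand for `J` at `p'` plus the mass of types newly demanding schools in `J`. -/
theorem stmt_16 {C : Type*} [Fintype C]
    (η : Measure ((C → ℝ) × (C → ℝ)))
    (p p' : C → ℝ) (hpp : p ≤ p')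
    (hsupp : η {θ | ¬ Function.Injective θ.1} = 0)
    (hmeas : MeasurableSet {θ : (C → ℝ) × (C → ℝ) | ∃ d, p d < p' d ∧ Demands p' d θ}) :
    (∀ θ : (C → ℝ) × (C → ℝ), Function.Injective θ.1 →
      ∀ d, p d < p' d → Demands p' d θ → ∃ d', p d' < p' d' ∧ Demands p d' θ) ∧
    η {θ | ∃ d, p d < p' d ∧ Demands p' d θ} +
        η ({θ | ∃ d, p d < p' d ∧ Demands p d θ} \
           {θ | ∃ d, p d < p' d ∧ Demands p' d θ}) ≤
      η {θ | ∃ d, p d < p' d ∧ Demands p d θ} := by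
  classical
  have key : ∀ θ : (C → ℝ) × (C → ℝ), Function.Injective θ.1 →
      ∀ d, p d < p' d → Demands p' d θ → ∃ d', p d' < p' d' ∧ Demands p d' θ := by
    intro θ hinj d hdJ hd
    obtain ⟨hfeas, hpos, hmax⟩ := hd
    set S : Finset C := Finset.univ.filter (fun e => p e < θ.2 e ∧ 0 < θ.1 e) with hS
    have hdS : d ∈ S := by
      simp only [hS, Finset.mem_filter, Finset.mem_univ, true_and]
      exact ⟨lt_of_le_of_lt (hpp d) hfeas, hpos⟩
    obtain ⟨d', hd'S, hd'max⟩ := S.exists_max_image θ.1 ⟨d, hdS⟩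
    simp only [hS, Finset.mem_filter, Finset.mem_univ, true_and] at hd'S
    have hDem : Demands p d' θ := by
      refine ⟨hd'S.1, hd'S.2, ?_⟩
      intro e he hpe
      exact hd'max e (by simp [hS, he, hpe])
    refine ⟨d', ?_, hDem⟩
    by_cases hdd : d' = d
    · subst hdd; exact hdJ
    · have hle : θ.1 d ≤ θ.1 d' := hd'max d hdS
      have hlt : θ.1 d < θ.1 d' :=
        lt_of_le_of_ne hle (fun h => hdd (hinj h.symm))
      have : ¬ (p' d' < θ.2 d') := fun h => absurd (hmax d' h hd'S.2) (not_le.mpr hlt)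
      exact lt_of_lt_of_le hd'S.1 (not_lt.mp this)
  refine ⟨key, ?_⟩
  set A := {θ : (C → ℝ) × (C → ℝ) | ∃ d, p d < p' d ∧ Demands p' d θ}
  set B := {θ : (C → ℝ) × (C → ℝ) | ∃ d, p d < p' d ∧ Demands p d θ}
  have hAB : A \ B ⊆ {θ : (C → ℝ) × (C → ℝ) | ¬ Function.Injective θ.1} := by
    rintro θ ⟨⟨d, hdJ, hd⟩, hnB⟩ hinj
    exact hnB (key θ hinj d hdJ hd)
  have hA0 : η (A \ B) = 0 := measure_mono_null hAB hsupp
  have h1 : η A ≤ η (A ∩ B) := by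
    calc η A ≤ η (A ∩ B) + η (A \ B) := measure_le_inter_add_diff η A B
    _ = η (A ∩ B) := by rw [hA0, add_zero]
  calc η A + η (B \ A) ≤ η (A ∩ B) + η (B \ A) := add_le_add h1 le_rfl
    _ = η (B ∩ A) + η (B \ A) := by rw [Set.inter_comm]
    _ = η B := measure_inter_add_diff B hmeas
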